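/- Let (I, J) be a pair of standard dyadic n-partitions such that γ^I_J preserves signs on E. Then S_R(I) and S_R(J) contain the same number of intervals of sign +1, and the same number of intervals of sign −1. -/

import Mathlib

/-- `IsSD l r` means `[l, r]` is a standard dyadic interval
`[k/2^m, (k+1)/2^m] ⊆ [0,1]` with `m ≥ 0`, `0 ≤ k ≤ 2^m - 1`. -/
def IsSD (l r : ℚ) : Prop :=
  ∃ m k : ℕ, k < 2 ^ m ∧ l = (k : ℚ) / 2 ^ m ∧ r = ((k : ℚ) + 1) / 2 ^ m

/-- A left standard dyadic interval: `[k/2^m, (k+1)/2^m]` with `m ≥ 1` and `k` even. -/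
def IsLeftSD (l r : ℚ) : Prop :=
  ∃ m k : ℕ, 1 ≤ m ∧ k < 2 ^ m ∧ Even k ∧
    l = (k : ℚ) / 2 ^ m ∧ r = ((k : ℚ) + 1) / 2 ^ m

/-- A right standard dyadic interval: `[k/2^m, (k+1)/2^m]` with `m ≥ 1` and `k` odd;
by convention `[0,1]` is also regarded as a right standard dyadic interval. -/
def IsRightSD (l r : ℚ) : Prop :=
  (l = 0 ∧ r = 1) ∨
    ∃ m k : ℕ, 1 ≤ m ∧ k < 2 ^ m ∧ Odd k ∧
      l = (k : ℚ) / 2 ^ m ∧ r = ((k : ℚ) + 1) / 2 ^ m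

/-- The set `S` of all standard dyadic intervals, an interval `[l, r]` being
represented by the pair `(l, r)` of its endpoints. -/
def SDSet : Set (ℚ × ℚ) := {A | IsSD A.1 A.2}

/-- The conjugate `Ā` of a standard dyadic interval `A ≠ [0,1]`:
the adjacent standard dyadic interval of the same length, on the right of `A`
if `A` is left, and on the left of `A` if `A` is right. -/
noncomputable def conjSD (A : ℚ × ℚ) : ℚ × ℚ := by
  classical
  exact if IsLeftSD A.1 A.2 then (A.2, 2 * A.2 - A.1) else (2 * A.1 - A.2, A.1)

/-- The union of two overlapping or adjacent closed intervals, as an interval: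
from the smaller left endpoint to the larger right endpoint.  In particular
`sdJoin A (conjSD A)` represents the interval `A ∪ Ā`. -/
def sdJoin (A B : ℚ × ℚ) : ℚ × ℚ := (min A.1 B.1, max A.2 B.2)

/-- A standard dyadic `n`-partition of `[0,1]`: breakpoints
`0 = a_0 < a_1 < ... < a_n = 1` with every `[a_i, a_{i+1}]` a standard dyadic
interval. -/
structure SDPartition (n : ℕ) where
  pts : Fin (n + 1) → ℚ
  first : pts 0 = 0
  last : pts (Fin.last n) = 1
  mono : StrictMono pts
  sd : ∀ i : Fin n, IsSD (pts i.castSucc) (pts i.succ)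

/-- `S(I)`: the set of intervals `[a_i, a_j]` (`i < j`) with endpoints breakpoints
of `I` that are standard dyadic intervals. -/
def SIn {n : ℕ} (I : SDPartition n) : Set (ℚ × ℚ) :=
  {A | (∃ i j : Fin (n + 1), i < j ∧ A = (I.pts i, I.pts j)) ∧ IsSD A.1 A.2}

/-- The midpoint of an interval. -/
def midQ (A : ℚ × ℚ) : ℚ := (A.1 + A.2) / 2

/-- The length of an interval. -/
def lenQ (A : ℚ × ℚ) : ℚ := A.2 - A.1

/-- `E`: the set of dyadic rationals strictly between 0 and 1. -/
def Edyadic : Set ℚ := {q | ∃ m k : ℕ, 1 ≤ k ∧ k < 2 ^ m ∧ q = (k : ℚ) / 2 ^ m}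

/-- `S_L(I) = S(I) ∩ S_L`. -/
def SLIn {n : ℕ} (I : SDPartition n) : Set (ℚ × ℚ) := {A ∈ SIn I | IsLeftSD A.1 A.2}

/-- `S_R(I) = S(I) ∩ S_R`. -/
def SRIn {n : ℕ} (I : SDPartition n) : Set (ℚ × ℚ) := {A ∈ SIn I | IsRightSD A.1 A.2}

/-- `M(I)`: the set of midpoints of the subintervals of `I`. -/
def MIn {n : ℕ} (I : SDPartition n) : Set ℚ :=
  {q | ∃ i : Fin n, q = midQ (I.pts i.castSucc, I.pts i.succ)}

/-- `E(I)`: the union of `M(I)` with the breakpoints of `I` other than 0 and 1. -/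
def EIn {n : ℕ} (I : SDPartition n) : Set ℚ :=
  MIn I ∪ {q | (∃ i : Fin (n + 1), I.pts i = q) ∧ q ≠ 0 ∧ q ≠ 1}

/-- `SignSpec s` says that `s` takes values in `{+1, -1}` on standard dyadic
intervals, `s([0,1]) = +1`, and for `A ≠ [0,1]`, `s A = s (A ∪ Ā)` if `A` is a
left interval while `s A = - s (A ∪ Ā)` if `A` is a right interval. -/
def SignSpec (s : ℚ × ℚ → ℤ) : Prop :=
  (∀ A ∈ SDSet, s A = 1 ∨ s A = -1) ∧
  s ((0 : ℚ), (1 : ℚ)) = 1 ∧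
  ∀ A ∈ SDSet, A ≠ ((0 : ℚ), (1 : ℚ)) →
    (IsLeftSD A.1 A.2 → s A = s (sdJoin A (conjSD A))) ∧
    (IsRightSD A.1 A.2 → s A = - s (sdJoin A (conjSD A)))

/-- `IsGamma I J γ` says that `γ = γ^I_J`: the piecewise linear map sending the
`i`-th breakpoint of `I` to the `i`-th breakpoint of `J` and linear on each
subinterval of `I`. -/
def IsGamma {n : ℕ} (I J : SDPartition n) (γ : ℚ → ℚ) : Prop :=
  ∀ i : Fin n, ∀ x : ℚ, I.pts i.castSucc ≤ x → x ≤ I.pts i.succ →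
    γ x = J.pts i.castSucc +
      (J.pts i.succ - J.pts i.castSucc) / (I.pts i.succ - I.pts i.castSucc) *
        (x - I.pts i.castSucc)

/-- `γ` preserves signs on `E`: `γ(E) = E` and every `e ∈ E` has the same sign
as `γ e`, where the sign of a point of `E` is the sign of the unique standard
dyadic interval having it as midpoint. -/
def PreservesSigns (s : ℚ × ℚ → ℤ) (γ : ℚ → ℚ) : Prop :=
  γ '' Edyadic = Edyadic ∧
  ∀ A B : ℚ × ℚ, A ∈ SDSet → B ∈ SDSet → γ (midQ A) = midQ B → s B = s A

lemma two_pow_posQ (m : ℕ) : (0:ℚ) < 2 ^ m := by positivity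

lemma nat_odd_unique {k k' m m' : ℕ} (hk : Odd k) (hk' : Odd k')
    (h : k * 2 ^ m' = k' * 2 ^ m) : k = k' ∧ m = m' := by
  rcases le_total m m' with hle | hle
  · obtain ⟨d, rfl⟩ := Nat.exists_eq_add_of_le hle
    rw [pow_add] at h
    have h2 : (k * 2 ^ d) * 2 ^ m = k' * 2 ^ m := by ring_nf; ring_nf at h; linarith
    have h3 : k * 2 ^ d = k' := Nat.eq_of_mul_eq_mul_right (pow_pos (by norm_num) m) h2
    rcases Nat.eq_zero_or_pos d with rfl | hd
    · simp at h3; omega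
    · exfalso
      obtain ⟨e, rfl⟩ : ∃ e, d = e + 1 := ⟨d - 1, by omega⟩
      rw [Nat.odd_iff] at hk'
      have hdvd : k' = (k * 2 ^ e) * 2 := by rw [← h3, pow_succ]; ring
      omega
  · obtain ⟨d, rfl⟩ := Nat.exists_eq_add_of_le hle
    rw [pow_add] at h
    have h2 : k * 2 ^ m' = (k' * 2 ^ d) * 2 ^ m' := by ring_nf; ring_nf at h; linarith
    have h3 : k = k' * 2 ^ d := Nat.eq_of_mul_eq_mul_right (pow_pos (by norm_num) m') h2
    rcases Nat.eq_zero_or_pos d with rfl | hd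
    · simp at h3; omega
    · exfalso
      obtain ⟨e, rfl⟩ : ∃ e, d = e + 1 := ⟨d - 1, by omega⟩
      rw [Nat.odd_iff] at hk
      have hdvd : k = (k' * 2 ^ e) * 2 := by rw [h3, pow_succ]; ring
      omega

lemma odd_div_unique {k k' m m' : ℕ} (hk : Odd k) (hk' : Odd k')
    (h : (k:ℚ) / 2 ^ m = (k':ℚ) / 2 ^ m') : k = k' ∧ m = m' := by
  rw [div_eq_div_iff (two_pow_posQ m).ne' (two_pow_posQ m').ne'] at h
  have h' : k * 2 ^ m' = k' * 2 ^ m := by exact_mod_cast h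
  exact nat_odd_unique hk hk' h'

lemma sd_midQ {A : ℚ × ℚ} (hA : A ∈ SDSet) :
    ∃ m k : ℕ, k < 2 ^ m ∧ A = ((k:ℚ)/2^m, ((k:ℚ)+1)/2^m) ∧
      midQ A = (2*(k:ℚ)+1) / 2 ^ (m+1) := by
  obtain ⟨m, k, hkm, h1, h2⟩ := hA
  refine ⟨m, k, hkm, Prod.ext h1 h2, ?_⟩
  rw [midQ, h1, h2, pow_succ]
  field_simp
  ring

lemma sd_inj {A B : ℚ × ℚ} (hA : A ∈ SDSet) (hB : B ∈ SDSet)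
    (h : midQ A = midQ B) : A = B := by
  obtain ⟨m, k, _, hA2, hA3⟩ := sd_midQ hA
  obtain ⟨m', k', _, hB2, hB3⟩ := sd_midQ hB
  rw [hA3, hB3] at h
  have h2 : (2*k+1 : ℕ) = (2*k'+1 : ℕ) ∧ m + 1 = m' + 1 := by
    apply odd_div_unique ⟨k, by ring⟩ ⟨k', by ring⟩
    push_cast
    convert h using 2 <;> push_cast <;> ring
  obtain ⟨hkk, hmm⟩ := h2
  have : k = k' := by omega
  have : m = m' := by omega
  rw [hA2, hB2]
  subst_vars
  rfl

open Classical in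
noncomputable def nodeAt (q : ℚ) : ℚ × ℚ :=
  if h : ∃ A, A ∈ SDSet ∧ midQ A = q then h.choose else (0, 0)

lemma nodeAt_eq {q : ℚ} {A : ℚ × ℚ} (hA : A ∈ SDSet) (h : midQ A = q) :
    nodeAt q = A := by
  have hex : ∃ B, B ∈ SDSet ∧ midQ B = q := ⟨A, hA, h⟩
  rw [nodeAt, dif_pos hex]
  exact sd_inj hex.choose_spec.1 hA (by rw [hex.choose_spec.2, h])

lemma parent_spec {k m : ℕ} (hk : Odd k) (hkm : k < 2 ^ m) :
    (((k:ℚ)-1)/2^m, ((k:ℚ)+1)/2^m) ∈ SDSet ∧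
    midQ (((k:ℚ)-1)/2^m, ((k:ℚ)+1)/2^m) = (k:ℚ)/2^m := by
  obtain ⟨t, rfl⟩ := hk
  have hm : m ≠ 0 := by
    rintro rfl
    simp only [pow_zero] at hkm
    omega
  obtain ⟨m', rfl⟩ : ∃ m', m = m' + 1 := ⟨m - 1, by omega⟩
  have hp : (2:ℕ) ^ (m' + 1) = 2 ^ m' * 2 := pow_succ 2 m'
  constructor
  · refine ⟨m', t, by omega, ?_, ?_⟩
    · push_cast
      rw [pow_succ]
      have h2 : ((2:ℚ) ^ m') ≠ 0 := (two_pow_posQ m').ne'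
      field_simp
      ring
    · push_cast
      rw [pow_succ]
      have h2 : ((2:ℚ) ^ m') ≠ 0 := (two_pow_posQ m').ne'
      field_simp
      ring
  · rw [midQ]
    have h2 : ((2:ℚ) ^ (m'+1)) ≠ 0 := (two_pow_posQ (m'+1)).ne'
    field_simp
    ring

lemma odd_rep : ∀ (m k : ℕ), 0 < k → k < 2 ^ m →
    ∃ k' m' : ℕ, Odd k' ∧ k' < 2 ^ m' ∧ (k:ℚ)/2^m = (k':ℚ)/2^m' := by
  intro m
  induction m with
  | zero => intro k h1 h2; simp only [pow_zero] at h2; omega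
  | succ m ih =>
    intro k h1 h2
    rcases Nat.even_or_odd k with he | ho
    · obtain ⟨t, rfl⟩ := he
      have hp : (2:ℕ) ^ (m + 1) = 2 ^ m * 2 := pow_succ 2 m
      obtain ⟨k', m', h3, h4, h5⟩ := ih t (by omega) (by omega)
      refine ⟨k', m', h3, h4, ?_⟩
      rw [← h5]
      push_cast
      rw [pow_succ]
      have h2' : ((2:ℚ) ^ m) ≠ 0 := (two_pow_posQ m).ne'
      field_simp
      ring
    · exact ⟨k, m+1, ho, h2, rfl⟩

lemma sd_upper {k m : ℕ} (hk : Odd k) {l r : ℚ} (hsd : IsSD l r)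
    (h1 : (k:ℚ)/2^m ≤ l) (h2 : l < ((k:ℚ)+1)/2^m) : r ≤ ((k:ℚ)+1)/2^m := by
  obtain ⟨m', k', hb, rfl, rfl⟩ := hsd
  rw [div_le_div_iff₀ (two_pow_posQ m) (two_pow_posQ m')] at h1
  rw [div_lt_div_iff₀ (two_pow_posQ m') (two_pow_posQ m)] at h2
  rw [div_le_div_iff₀ (two_pow_posQ m') (two_pow_posQ m)]
  have h1' : k * 2^m' ≤ k' * 2^m := by exact_mod_cast h1
  have h2' : k' * 2^m < (k+1) * 2^m' := by exact_mod_cast h2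
  have goal' : (k'+1) * 2^m ≤ (k+1) * 2^m' := by
    rcases le_total m m' with hle | hle
    · obtain ⟨d, rfl⟩ := Nat.exists_eq_add_of_le hle
      rw [pow_add] at h2' ⊢
      have h2'' : k' * 2^m < ((k+1) * 2^d) * 2^m := by
        calc k' * 2^m < (k+1) * (2^m * 2^d) := h2'
        _ = ((k+1) * 2^d) * 2^m := by ring
      have h3 : k' < (k+1) * 2^d := Nat.lt_of_mul_lt_mul_right h2''
      calc (k'+1) * 2^m ≤ ((k+1) * 2^d) * 2^m := Nat.mul_le_mul_right _ h3
        _ = (k+1) * (2^m * 2^d) := by ring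
    · obtain ⟨d, rfl⟩ := Nat.exists_eq_add_of_le hle
      rw [pow_add] at h1' h2'
      have ha : k * 2^m' ≤ (k' * 2^d) * 2^m' := by
        calc k * 2^m' ≤ k' * (2^m' * 2^d) := h1'
        _ = (k' * 2^d) * 2^m' := by ring
      have hb' : (k' * 2^d) * 2^m' < (k+1) * 2^m' := by
        calc (k' * 2^d) * 2^m' = k' * (2^m' * 2^d) := by ring
        _ < (k+1) * 2^m' := h2'
      have h3 : k ≤ k' * 2^d := Nat.le_of_mul_le_mul_right ha (pow_pos (by norm_num) m')
      have h4 : k' * 2^d < k + 1 := Nat.lt_of_mul_lt_mul_right hb'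
      have h5 : k' * 2^d = k := by omega
      have hd0 : d = 0 := by
        by_contra hd
        obtain ⟨e, rfl⟩ : ∃ e, d = e + 1 := ⟨d - 1, by omega⟩
        rw [Nat.odd_iff] at hk
        have : k = (k' * 2 ^ e) * 2 := by rw [← h5, pow_succ]; ring
        omega
      subst hd0
      simp only [pow_zero, mul_one] at h5
      subst h5
      rw [pow_add, pow_zero, mul_one]
  exact_mod_cast goal'

lemma npos {n : ℕ} (K : SDPartition n) : 0 < n := by
  rcases Nat.eq_zero_or_pos n with rfl | h
  · have h1 := K.first
    have h2 := K.last
    rw [show Fin.last 0 = 0 from rfl, h1] at h2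
    norm_num at h2
  · exact h

lemma pts_pos {n : ℕ} (K : SDPartition n) {i : Fin (n+1)} (h : i ≠ 0) :
    0 < K.pts i := by
  rw [← K.first]
  apply K.mono
  exact Fin.pos_of_ne_zero h

lemma bp_rep {n : ℕ} (K : SDPartition n) {i : Fin (n+1)} (h0 : i ≠ 0)
    (hl : i ≠ Fin.last n) :
    ∃ k m : ℕ, Odd k ∧ k < 2^m ∧ K.pts i = (k:ℚ)/2^m := by
  have hvl : i.val < n := by
    have h1 := i.isLt
    have h2 : i.val ≠ n := fun h => hl (Fin.ext h)
    omega
  obtain ⟨m, k, hkm, h1, h2⟩ := K.sd ⟨i.val, hvl⟩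
  have hci : (⟨i.val, hvl⟩ : Fin n).castSucc = i := Fin.ext rfl
  rw [hci] at h1
  have hk0 : 0 < k := by
    rcases Nat.eq_zero_or_pos k with rfl | h
    · exfalso
      have hp := pts_pos K h0
      rw [h1] at hp
      norm_num at hp
    · exact h
  obtain ⟨k', m', ho, hb, he⟩ := odd_rep m k hk0 hkm
  exact ⟨k', m', ho, hb, by rw [h1, he]⟩

lemma gamma_bp {n : ℕ} {I J : SDPartition n} {γ : ℚ → ℚ} (hγ : IsGamma I J γ)
    {i : Fin (n+1)} (hl : i ≠ Fin.last n) : γ (I.pts i) = J.pts i := by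
  have hvl : i.val < n := by
    have h1 := i.isLt
    have h2 : i.val ≠ n := fun h => hl (Fin.ext h)
    omega
  have hci : (⟨i.val, hvl⟩ : Fin n).castSucc = i := Fin.ext rfl
  have h := hγ ⟨i.val, hvl⟩ (I.pts (⟨i.val, hvl⟩ : Fin n).castSucc) le_rfl
    (le_of_lt (I.mono (Fin.castSucc_lt_succ)))
  simp only [sub_self, mul_zero, add_zero] at h
  rw [hci] at h
  exact h


lemma div_mono2 {a b : ℚ} (m : ℕ) (h : a ≤ b) : a / 2^m ≤ b / 2^m := by
  rw [div_le_div_iff₀ (two_pow_posQ m) (two_pow_posQ m)]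
  exact mul_le_mul_of_nonneg_right h (le_of_lt (two_pow_posQ m))

lemma exists_bp {n : ℕ} (K : SDPartition n) {i : Fin (n+1)} {k m : ℕ}
    (hk : Odd k) (hkm : k < 2^m) (hq : K.pts i = (k:ℚ)/2^m) :
    ∃ j : Fin (n+1), K.pts j = ((k:ℚ)+1)/2^m := by
  classical
  have hpos : (0:ℚ) < ((k:ℚ)+1)/2^m := by positivity
  have hle1 : ((k:ℚ)+1)/2^m ≤ 1 := by
    rw [div_le_one (two_pow_posQ m)]
    have : (k:ℚ) + 1 ≤ ((2:ℚ))^m := by exact_mod_cast Nat.succ_le_of_lt hkm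
    linarith
  set t : ℚ := ((k:ℚ)+1)/2^m with ht
  set F : Finset (Fin (n+1)) := Finset.filter (fun j => t ≤ K.pts j) Finset.univ with hF
  have hne : F.Nonempty := ⟨Fin.last n, by simp [hF, K.last, hle1]⟩
  set j := F.min' hne with hjdef
  have hj : t ≤ K.pts j := (Finset.mem_filter.1 (F.min'_mem hne)).2
  have hmin : ∀ j', t ≤ K.pts j' → j ≤ j' := fun j' h' => F.min'_le j' (by simp [hF, h'])
  have hkt : (k:ℚ)/2^m < t := by
    rw [ht]
    rw [div_lt_div_iff₀ (two_pow_posQ m) (two_pow_posQ m)]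
    nlinarith [two_pow_posQ m]
  have hij : i < j := by
    apply K.mono.lt_iff_lt.1
    rw [hq]
    exact lt_of_lt_of_le hkt hj
  have hj0 : j.val ≠ 0 := by
    intro h
    have hj00 : j = 0 := Fin.ext h
    rw [hj00, K.first] at hj
    linarith
  have hjn : j.val - 1 < n := by have := j.isLt; omega
  set j' : Fin n := ⟨j.val - 1, hjn⟩ with hj'
  have hsucc : j'.succ = j := Fin.ext (by simp [hj', Fin.val_succ]; omega)
  have hcastlt : j'.castSucc < j := by rw [← hsucc]; exact Fin.castSucc_lt_succ
  have hlow : K.pts j'.castSucc < t := by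
    by_contra hc
    push_neg at hc
    exact absurd (hmin _ hc) (not_le.2 hcastlt)
  have hile : i ≤ j'.castSucc := by
    rw [Fin.le_def]
    have h1 : i.val < j.val := hij
    simp only [Fin.coe_castSucc, hj']
    omega
  have hql : (k:ℚ)/2^m ≤ K.pts j'.castSucc := by
    rw [← hq]
    exact K.mono.le_iff_le.2 hile
  have hup : K.pts j'.succ ≤ ((k:ℚ)+1)/2^m := by
    refine sd_upper hk (K.sd j') hql ?_
    rw [← ht]
    exact hlow
  refine ⟨j, le_antisymm ?_ hj⟩
  rw [← hsucc]
  exact hup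

lemma not_left {k m : ℕ} (hk : Odd k) (hkm : k < 2^m) :
    ¬ IsLeftSD ((k:ℚ)/2^m) (((k:ℚ)+1)/2^m) := by
  rintro ⟨m2, k2, hm2, hk2m, hk2e, h1, h2⟩
  rw [div_eq_div_iff (two_pow_posQ m).ne' (two_pow_posQ m2).ne'] at h1
  have h2' : ((k:ℚ)+1) * 2 ^ m2 = ((k2:ℚ)+1) * 2 ^ m := by
    rw [div_eq_div_iff (two_pow_posQ m).ne' (two_pow_posQ m2).ne'] at h2
    exact h2
  have h1n : k * 2 ^ m2 = k2 * 2 ^ m := by exact_mod_cast h1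
  have h2n : (k+1) * 2 ^ m2 = (k2+1) * 2 ^ m := by exact_mod_cast h2'
  have hpe : (2:ℕ)^m2 = 2^m := by
    zify at h1n h2n
    nlinarith [h1n, h2n]
  have hm2m : m2 = m := Nat.pow_right_injective (by norm_num) hpe
  subst hm2m
  have hkk : k = k2 := Nat.eq_of_mul_eq_mul_right (pow_pos (by norm_num) m2) h1n
  subst hkk
  rw [Nat.odd_iff] at hk
  obtain ⟨r, hr⟩ := hk2e
  omega

lemma right_sign {s : ℚ × ℚ → ℤ} (hs : SignSpec s) {k m : ℕ} (hk : Odd k)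
    (hkm : k < 2^m) :
    s ((k:ℚ)/2^m, ((k:ℚ)+1)/2^m) = - s (((k:ℚ)-1)/2^m, ((k:ℚ)+1)/2^m) := by
  have hm0 : m ≠ 0 := by
    rintro rfl
    simp only [pow_zero] at hkm
    have := hk.pos
    omega
  have hkQ : (0:ℚ) < (k:ℚ) := by exact_mod_cast hk.pos
  have hA : ((k:ℚ)/2^m, ((k:ℚ)+1)/2^m) ∈ SDSet := ⟨m, k, hkm, rfl, rfl⟩
  have hne : ((k:ℚ)/2^m, ((k:ℚ)+1)/2^m) ≠ ((0:ℚ), (1:ℚ)) := by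
    intro h
    have h1 : (k:ℚ)/2^m = 0 := congrArg Prod.fst h
    have h2 : (0:ℚ) < (k:ℚ)/2^m := by positivity
    rw [h1] at h2
    exact lt_irrefl _ h2
  have hR : IsRightSD ((k:ℚ)/2^m) (((k:ℚ)+1)/2^m) :=
    Or.inr ⟨m, k, by omega, hkm, hk, rfl, rfl⟩
  have h := (hs.2.2 _ hA hne).2 hR
  rw [h]
  congr 1
  have hnl : ¬ IsLeftSD ((((k:ℚ)/2^m, ((k:ℚ)+1)/2^m) : ℚ × ℚ)).1
      (((k:ℚ)/2^m, ((k:ℚ)+1)/2^m) : ℚ × ℚ).2 := not_left hk hkm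
  rw [conjSD, if_neg hnl, sdJoin]
  have e1 : 2 * ((k:ℚ)/2^m) - ((k:ℚ)+1)/2^m = ((k:ℚ)-1)/2^m := by ring
  have e2 : ((k:ℚ)-1)/2^m ≤ (k:ℚ)/2^m := div_mono2 m (by linarith)
  have e3 : (k:ℚ)/2^m ≤ ((k:ℚ)+1)/2^m := div_mono2 m (by linarith)
  apply congrArg s
  refine Prod.ext ?_ ?_
  · show min ((k:ℚ)/2^m) (2 * ((k:ℚ)/2^m) - ((k:ℚ)+1)/2^m) = ((k:ℚ)-1)/2^m
    rw [e1]
    exact min_eq_right e2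
  · show max (((k:ℚ)+1)/2^m) ((k:ℚ)/2^m) = ((k:ℚ)+1)/2^m
    exact max_eq_left e3

lemma nodeAt_bp {n : ℕ} (K : SDPartition n) {i : Fin (n+1)} {k m : ℕ}
    (hk : Odd k) (hkm : k < 2^m) (hq : K.pts i = (k:ℚ)/2^m) :
    nodeAt (K.pts i) = (((k:ℚ)-1)/2^m, ((k:ℚ)+1)/2^m) := by
  obtain ⟨hmem, hmid⟩ := parent_spec hk hkm
  exact nodeAt_eq hmem (by rw [hmid, hq])


noncomputable def rhoK {n : ℕ} (K : SDPartition n) (i : Fin (n+1)) : ℚ × ℚ :=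
  (K.pts i, (nodeAt (K.pts i)).2)

def Dset {n : ℕ} (K : SDPartition n) (s : ℚ × ℚ → ℤ) (c : ℤ) : Set (Fin (n+1)) :=
  {i | i ≠ 0 ∧ i ≠ Fin.last n ∧ s (nodeAt (K.pts i)) = -c}

lemma master {n : ℕ} (K : SDPartition n) {s : ℚ × ℚ → ℤ} (hs : SignSpec s)
    (c : ℤ) :
    {A ∈ SRIn K | s A = c} =
      rhoK K '' Dset K s c ∪ {A : ℚ × ℚ | A = ((0:ℚ),(1:ℚ)) ∧ c = 1} := by
  ext A
  constructor
  · rintro ⟨⟨⟨⟨i, j, hij, hA⟩, hsd⟩, hR⟩, hsc⟩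
    rcases hR with ⟨h01a, h01b⟩ | ⟨m, k, hm1, hkm, hk, h1, h2⟩
    · right
      have hA01 : A = ((0:ℚ),(1:ℚ)) := Prod.ext h01a h01b
      refine ⟨hA01, ?_⟩
      rw [hA01, hs.2.1] at hsc
      exact hsc.symm
    · left
      have hA1 : K.pts i = (k:ℚ)/2^m := by rw [hA] at h1; exact h1
      have hA2 : K.pts j = ((k:ℚ)+1)/2^m := by rw [hA] at h2; exact h2
      have hAeq : A = ((k:ℚ)/2^m, ((k:ℚ)+1)/2^m) := Prod.ext h1 h2
      have hi0 : i ≠ 0 := by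
        intro h0
        rw [h0, K.first] at hA1
        have hkQ : (0:ℚ) < (k:ℚ) := by exact_mod_cast hk.pos
        have h2' : (0:ℚ) < (k:ℚ)/2^m := by positivity
        rw [← hA1] at h2'
        exact lt_irrefl _ h2'
      have hil : i ≠ Fin.last n := by
        intro h
        rw [h] at hij
        exact absurd hij (not_lt.2 (Fin.le_last j))
      refine ⟨i, ⟨hi0, hil, ?_⟩, ?_⟩
      · rw [nodeAt_bp K hk hkm hA1]
        have hrs := right_sign hs hk hkm
        rw [hAeq] at hsc
        omega
      · rw [rhoK, nodeAt_bp K hk hkm hA1, hAeq]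
        exact Prod.ext hA1 rfl
  · rintro (⟨i, ⟨hi0, hil, hsn⟩, rfl⟩ | ⟨rfl, rfl⟩)
    · obtain ⟨k, m, hk, hkm, hq⟩ := bp_rep K hi0 hil
      have hnode := nodeAt_bp K hk hkm hq
      have hrho : rhoK K i = ((k:ℚ)/2^m, ((k:ℚ)+1)/2^m) := by
        rw [rhoK, hnode, hq]
      rw [hrho]
      obtain ⟨j, hj⟩ := exists_bp K hk hkm hq
      have hm1 : 1 ≤ m := by
        by_contra hm
        push_neg at hm
        have hm0 : m = 0 := by omega
        subst hm0
        simp only [pow_zero] at hkm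
        have := hk.pos
        omega
      have hltQ : (k:ℚ)/2^m < ((k:ℚ)+1)/2^m := by
        rw [div_lt_div_iff₀ (two_pow_posQ m) (two_pow_posQ m)]
        nlinarith [two_pow_posQ m]
      have hij : i < j := by
        apply K.mono.lt_iff_lt.1
        rw [hq, hj]
        exact hltQ
      refine ⟨⟨⟨⟨i, j, hij, Prod.ext hq.symm hj.symm⟩, ⟨m, k, hkm, rfl, rfl⟩⟩,
        Or.inr ⟨m, k, hm1, hkm, hk, rfl, rfl⟩⟩, ?_⟩
      have hrs := right_sign hs hk hkm
      rw [hnode] at hsn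
      omega
    · refine ⟨⟨⟨⟨0, Fin.last n, ?_, Prod.ext K.first.symm K.last.symm⟩,
        ⟨0, 0, by norm_num, by norm_num, by norm_num⟩⟩, Or.inl ⟨rfl, rfl⟩⟩, hs.2.1⟩
      rw [Fin.lt_def]
      simp only [Fin.val_zero, Fin.val_last]
      exact npos K

/-- if `γ^I_J` preserves signs on `E`, then `S_R(I)` and `S_R(J)`
contain the same number of intervals of sign `+1` and the same number of
intervals of sign `-1`. -/
theorem statement_17 {n : ℕ} (I J : SDPartition n) (s : ℚ × ℚ → ℤ)
    (hs : SignSpec s) (γ : ℚ → ℚ) (hγ : IsGamma I J γ)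
    (hpres : PreservesSigns s γ) :
    ({A ∈ SRIn I | s A = 1}).ncard = ({A ∈ SRIn J | s A = 1}).ncard ∧
    ({A ∈ SRIn I | s A = -1}).ncard = ({A ∈ SRIn J | s A = -1}).ncard := by
  have key : ∀ c : ℤ,
      {A ∈ SRIn I | s A = c}.ncard = {A ∈ SRIn J | s A = c}.ncard := by
    intro c
    have hnode : ∀ i : Fin (n+1), i ≠ 0 → i ≠ Fin.last n →
        s (nodeAt (J.pts i)) = s (nodeAt (I.pts i)) := by
      intro i h0 hl
      obtain ⟨k, m, hk, hkm, hq⟩ := bp_rep I h0 hl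
      obtain ⟨k', m', hk', hkm', hq'⟩ := bp_rep J h0 hl
      rw [nodeAt_bp I hk hkm hq, nodeAt_bp J hk' hkm' hq']
      apply hpres.2 _ _ (parent_spec hk hkm).1 (parent_spec hk' hkm').1
      rw [(parent_spec hk hkm).2, (parent_spec hk' hkm').2, ← hq, ← hq']
      exact gamma_bp hγ hl
    have hD : Dset I s c = Dset J s c := by
      ext i
      simp only [Dset, Set.mem_setOf_eq]
      constructor <;> rintro ⟨h0, hl, hsn⟩ <;> refine ⟨h0, hl, ?_⟩
      · rw [hnode i h0 hl]; exact hsn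
      · rw [← hnode i h0 hl]; exact hsn
    have card_eq : ∀ (K : SDPartition n),
        (rhoK K '' Dset K s c ∪ {A : ℚ × ℚ | A = ((0:ℚ),(1:ℚ)) ∧ c = 1}).ncard
          = (Dset K s c).ncard
            + ({A : ℚ × ℚ | A = ((0:ℚ),(1:ℚ)) ∧ c = 1}).ncard := by
      intro K
      rw [Set.ncard_union_eq ?_ ?_ ?_]
      · rw [Set.ncard_image_of_injOn]
        intro a _ b _ hab
        have h1 : K.pts a = K.pts b := congrArg Prod.fst hab
        exact K.mono.injective h1
      · rw [Set.disjoint_left]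
        rintro A ⟨i, ⟨hi0, _, _⟩, rfl⟩ ⟨hA01, _⟩
        have h1 : (rhoK K i).1 = (0:ℚ) := by rw [hA01]
        have h2 : (0:ℚ) < (rhoK K i).1 := pts_pos K hi0
        rw [h1] at h2
        exact lt_irrefl _ h2
      · exact (Set.toFinite (Dset K s c)).image _
      · exact (Set.finite_singleton ((0:ℚ),(1:ℚ))).subset (by rintro A ⟨rfl, _⟩; simp)
    rw [master I hs c, master J hs c, card_eq I, card_eq J, hD]
  exact ⟨key 1, key (-1)⟩
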